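/- Let K be a positive integer, μ > 0, and let B ∈ ℂ^{K×K} have a singular value decomposition B = U C Vᴴ, where U and V are unitary K × K matrices and C = diag(c_1, …, c_K) with c_1 ≥ … ≥ c_K ≥ 0. Define A = U · diag(min(c_1, μ), …, min(c_K, μ)) · Vᴴ. Then ‖A‖_{2,2} ≤ μ, and for every matrix A' ∈ ℂ^{K×K} with ‖A'‖_{2,2} ≤ μ one has ‖A − B‖_F ≤ ‖A' − B‖_F, with equality only if A' = A. That is, A is the unique minimizer of the Frobenius distance to B over the spectral-norm ball of radius μ. -/

import Mathlib

open scoped Matrix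

/-- The Frobenius norm of a complex matrix: `‖A‖_F = (trace(AᴴA))^{1/2}
= (∑ᵢⱼ |Aᵢⱼ|²)^{1/2}`. -/
noncomputable def frobNorm {m n : Type*} [Fintype m] [Fintype n]
    (A : Matrix m n ℂ) : ℝ :=
  Real.sqrt (∑ i, ∑ j, ‖A i j‖ ^ 2)

/-- The spectral norm `‖A‖_{2,2}` of a square complex matrix: the operator norm
induced by the Euclidean (ℓ₂) vector norm, i.e. the largest singular value. -/
noncomputable def specNorm {K : ℕ} (A : Matrix (Fin K) (Fin K) ℂ) : ℝ :=
  ‖LinearMap.toContinuousLinearMap (Matrix.toEuclideanLin A)‖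

open Matrix
open scoped Matrix.Norms.L2Operator

noncomputable def sqsum {m n : Type*} [Fintype m] [Fintype n] (X : Matrix m n ℂ) : ℝ :=
  ∑ i, ∑ j, ‖X i j‖ ^ 2

lemma sqsum_eq_trace {K : ℕ} (X : Matrix (Fin K) (Fin K) ℂ) :
    sqsum X = (Matrix.trace (Xᴴ * X)).re := by
  rw [Matrix.trace]
  simp only [Matrix.diag, Matrix.mul_apply, Matrix.conjTranspose_apply]
  rw [Complex.re_sum, sqsum, Finset.sum_comm]
  refine Finset.sum_congr rfl fun i _ => ?_
  rw [Complex.re_sum]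
  refine Finset.sum_congr rfl fun j _ => ?_
  rw [Complex.sq_norm, Complex.normSq_apply, Complex.mul_re]
  simp [Complex.conj_re, Complex.conj_im]

lemma sqsum_conj {K : ℕ} (U V X : Matrix (Fin K) (Fin K) ℂ)
    (hU : Uᴴ * U = 1) (hV : Vᴴ * V = 1) : sqsum (U * X * Vᴴ) = sqsum X := by
  rw [sqsum_eq_trace, sqsum_eq_trace]
  have h1 : (U * X * Vᴴ)ᴴ * (U * X * Vᴴ) = V * (Xᴴ * X) * Vᴴ := by
    simp only [Matrix.conjTranspose_mul, Matrix.conjTranspose_conjTranspose]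
    calc V * (Xᴴ * Uᴴ) * (U * X * Vᴴ) = V * (Xᴴ * ((Uᴴ * U) * X)) * Vᴴ := by
          simp only [Matrix.mul_assoc]
      _ = V * (Xᴴ * X) * Vᴴ := by rw [hU, Matrix.one_mul]
  rw [h1, Matrix.trace_mul_comm, ← Matrix.mul_assoc, hV, Matrix.one_mul]

lemma coord_le_norm {K : ℕ} (x : EuclideanSpace ℂ (Fin K)) (i : Fin K) : ‖x i‖ ≤ ‖x‖ := by
  rw [EuclideanSpace.norm_eq]
  have h : ‖x i‖ ^ 2 ≤ ∑ j, ‖x j‖ ^ 2 :=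
    Finset.single_le_sum (f := fun j => ‖x j‖ ^ 2) (fun j _ => by positivity) (Finset.mem_univ i)
  calc ‖x i‖ = Real.sqrt (‖x i‖ ^ 2) := by rw [Real.sqrt_sq (norm_nonneg _)]
    _ ≤ _ := Real.sqrt_le_sqrt h

lemma entry_le_l2norm {K : ℕ} (M : Matrix (Fin K) (Fin K) ℂ) (j k : Fin K) :
    ‖M j k‖ ≤ ‖M‖ := by
  have h := M.l2_opNorm_mulVec ((EuclideanSpace.equiv (Fin K) ℂ).symm (Pi.single k 1))
  have hnorm : ‖(EuclideanSpace.equiv (Fin K) ℂ).symm (Pi.single k (1:ℂ))‖ = 1 := by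
    have he : (EuclideanSpace.equiv (Fin K) ℂ).symm (Pi.single k (1:ℂ))
        = EuclideanSpace.single k (1:ℂ) := rfl
    rw [he, EuclideanSpace.norm_single]; simp
  have h2 := coord_le_norm ((EuclideanSpace.equiv (Fin K) ℂ).symm
      (M *ᵥ Pi.single k 1)) j
  have hco : ((EuclideanSpace.equiv (Fin K) ℂ).symm (M *ᵥ Pi.single k 1)) j = M j k := by
    show (M *ᵥ Pi.single k 1) j = M j k
    simp [Matrix.mulVec_single]
  rw [hco] at h2
  refine h2.trans ?_
  have h3 : ‖(EuclideanSpace.equiv (Fin K) ℂ).symm (M *ᵥ Pi.single k 1)‖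
      ≤ ‖M‖ * ‖(EuclideanSpace.equiv (Fin K) ℂ).symm (Pi.single k (1:ℂ))‖ := h
  rw [hnorm, mul_one] at h3
  exact h3

lemma l2norm_one {K : ℕ} (hK : 0 < K) : ‖(1 : Matrix (Fin K) (Fin K) ℂ)‖ = 1 := by
  haveI : NeZero K := ⟨hK.ne'⟩
  have h := Matrix.l2_opNorm_conjTranspose_mul_self (1 : Matrix (Fin K) (Fin K) ℂ)
  simp only [Matrix.conjTranspose_one, Matrix.one_mul] at h
  have h0 : ‖(1 : Matrix (Fin K) (Fin K) ℂ)‖ ≠ 0 := by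
    rw [norm_ne_zero_iff]
    exact one_ne_zero
  have h1 : ‖(1 : Matrix (Fin K) (Fin K) ℂ)‖ * 1
      = ‖(1 : Matrix (Fin K) (Fin K) ℂ)‖ * ‖(1 : Matrix (Fin K) (Fin K) ℂ)‖ := by
    rw [mul_one]; exact h
  exact (mul_left_cancel₀ h0 h1).symm

lemma l2norm_unitary {K : ℕ} (hK : 0 < K) (U : Matrix (Fin K) (Fin K) ℂ)
    (hU : Uᴴ * U = 1) : ‖U‖ = 1 := by
  have h := Matrix.l2_opNorm_conjTranspose_mul_self U
  rw [hU, l2norm_one hK] at h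
  nlinarith [norm_nonneg U]

lemma l2norm_diagonal_le {K : ℕ} (d : Fin K → ℂ) {μ : ℝ} (hμ : 0 ≤ μ)
    (hd : ∀ k, ‖d k‖ ≤ μ) : ‖Matrix.diagonal d‖ ≤ μ := by
  rw [Matrix.cstar_norm_def]
  refine ContinuousLinearMap.opNorm_le_bound _ hμ fun x => ?_
  have hx : (Matrix.toEuclideanCLM (n := Fin K) (𝕜 := ℂ) (Matrix.diagonal d)) x
      = (WithLp.equiv _ _).symm ((Matrix.diagonal d) *ᵥ (WithLp.equiv _ _ x)) := rfl
  rw [hx, EuclideanSpace.norm_eq, EuclideanSpace.norm_eq]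
  have hterm : ∀ i, ‖((WithLp.equiv 2 (Fin K → ℂ)).symm
      ((Matrix.diagonal d) *ᵥ (WithLp.equiv 2 (Fin K → ℂ) x))) i‖ ^ 2 ≤ μ^2 * ‖x i‖ ^ 2 := by
    intro i
    have : ((WithLp.equiv 2 (Fin K → ℂ)).symm
        ((Matrix.diagonal d) *ᵥ (WithLp.equiv 2 (Fin K → ℂ) x))) i = d i * x i := by
      show ((Matrix.diagonal d) *ᵥ (WithLp.equiv 2 (Fin K → ℂ) x)) i = d i * x i
      rw [Matrix.mulVec_diagonal]; rfl
    rw [this, norm_mul, mul_pow]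
    have := hd i
    have h2 : ‖d i‖^2 ≤ μ^2 := by nlinarith [norm_nonneg (d i)]
    nlinarith [sq_nonneg (‖x i‖)]
  calc Real.sqrt (∑ i, ‖((WithLp.equiv 2 (Fin K → ℂ)).symm
      ((Matrix.diagonal d) *ᵥ (WithLp.equiv 2 (Fin K → ℂ) x))) i‖ ^ 2)
      ≤ Real.sqrt (∑ i, μ^2 * ‖x i‖^2) :=
        Real.sqrt_le_sqrt (Finset.sum_le_sum fun i _ => hterm i)
    _ = μ * Real.sqrt (∑ i, ‖x i‖^2) := by
        rw [← Finset.mul_sum, Real.sqrt_mul (by positivity), Real.sqrt_sq hμ]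

lemma sqsum_diagonal {K : ℕ} (d : Fin K → ℂ) :
    sqsum (Matrix.diagonal d) = ∑ k, ‖d k‖ ^ 2 := by
  rw [sqsum]
  refine Finset.sum_congr rfl fun i _ => ?_
  rw [Finset.sum_eq_single i]
  · rw [Matrix.diagonal_apply_eq]
  · intro j _ hj
    rw [Matrix.diagonal_apply_ne' _ hj, norm_zero]
    norm_num
  · intro h; exact absurd (Finset.mem_univ i) h

lemma scalar_key {t μ : ℝ} (ht : 0 ≤ t) (hμ : 0 < μ) {z : ℂ} (hz : ‖z‖ ≤ μ) :
    (t - min t μ) ^ 2 ≤ ‖z - (t : ℂ)‖ ^ 2 ∧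
      (‖z - (t : ℂ)‖ ^ 2 = (t - min t μ) ^ 2 → z = ((min t μ : ℝ) : ℂ)) := by
  rcases le_or_gt t μ with h | h
  · rw [min_eq_left h]
    constructor
    · simpa using sq_nonneg ‖z - (t : ℂ)‖
    · intro he
      have h0 : ‖z - (t : ℂ)‖ = 0 := by nlinarith [norm_nonneg (z - (t : ℂ))]
      have := norm_eq_zero.mp h0
      have : z = (t : ℂ) := sub_eq_zero.mp this
      rw [this]
  · rw [min_eq_right h.le]
    have htc : ‖(t : ℂ)‖ = t := by rw [Complex.norm_real, Real.norm_eq_abs, abs_of_nonneg ht]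
    have hb : t - μ ≤ ‖z - (t : ℂ)‖ := by
      have h1 : ‖(t : ℂ)‖ - ‖z‖ ≤ ‖(t : ℂ) - z‖ := norm_sub_norm_le _ _
      rw [norm_sub_rev] at h1
      rw [htc] at h1
      linarith
    have htμ : (0:ℝ) ≤ t - μ := by linarith
    constructor
    · nlinarith [norm_nonneg (z - (t : ℂ))]
    · intro he
      have hzt : ‖z - (t : ℂ)‖ = t - μ := by nlinarith [norm_nonneg (z - (t : ℂ))]
      have hre : z.re ≤ μ := (Complex.re_le_norm z).trans hz
      have hnorm2 : (z.re - t) ^ 2 + z.im ^ 2 = (t - μ) ^ 2 := by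
        have hh : ‖z - (t : ℂ)‖ ^ 2 = (z.re - t) ^ 2 + z.im ^ 2 := by
          rw [Complex.sq_norm, Complex.normSq_apply]
          simp
          ring
        rw [← hh, hzt]
      have him : z.im = 0 := by nlinarith [sq_nonneg z.im, sq_nonneg (z.re - t)]
      have hxe : z.re = μ := by nlinarith
      apply Complex.ext
      · simpa using hxe
      · simpa using him

lemma frobNorm_eq {m n : Type*} [Fintype m] [Fintype n] (X : Matrix m n ℂ) :
    frobNorm X = Real.sqrt (sqsum X) := rfl

lemma sqsum_nonneg {m n : Type*} [Fintype m] [Fintype n] (X : Matrix m n ℂ) :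
    0 ≤ sqsum X :=
  Finset.sum_nonneg fun _ _ => Finset.sum_nonneg fun _ _ => by positivity


/-- **Projection onto the spectral-norm ball by singular value truncation.**  If
`B = U C Vᴴ` is a singular value decomposition with nonincreasing nonnegative
singular values `c`, then `A = U [C]_μ Vᴴ`, obtained by truncating the singular values
at `μ`, satisfies `‖A‖_{2,2} ≤ μ` and is the unique minimizer of the Frobenius distance
to `B` over the spectral-norm ball of radius `μ`. -/
theorem nearest_spectral_norm_ball (K : ℕ) (hK : 0 < K) (μ : ℝ) (hμ : 0 < μ)
    (U V : Matrix (Fin K) (Fin K) ℂ) (hU : Uᴴ * U = 1) (hV : Vᴴ * V = 1)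
    (c : Fin K → ℝ) (hc0 : ∀ k, 0 ≤ c k) (hc : Antitone c)
    (B : Matrix (Fin K) (Fin K) ℂ)
    (hB : B = U * Matrix.diagonal (fun k => ((c k : ℝ) : ℂ)) * Vᴴ)
    (A : Matrix (Fin K) (Fin K) ℂ)
    (hA : A = U * Matrix.diagonal (fun k => ((min (c k) μ : ℝ) : ℂ)) * Vᴴ) :
    specNorm A ≤ μ ∧
      ∀ A' : Matrix (Fin K) (Fin K) ℂ, specNorm A' ≤ μ →
        frobNorm (A - B) ≤ frobNorm (A' - B) ∧
          (frobNorm (A - B) = frobNorm (A' - B) → A' = A) := by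
  have hUU : U * Uᴴ = 1 := mul_eq_one_comm.mp hU
  have hVV : V * Vᴴ = 1 := mul_eq_one_comm.mp hV
  have hVH : ‖Vᴴ‖ = 1 :=
    l2norm_unitary hK Vᴴ (by rw [Matrix.conjTranspose_conjTranspose]; exact hVV)
  have hUH : ‖Uᴴ‖ = 1 :=
    l2norm_unitary hK Uᴴ (by rw [Matrix.conjTranspose_conjTranspose]; exact hUU)
  have hUn : ‖U‖ = 1 := l2norm_unitary hK U hU
  have hVn : ‖V‖ = 1 := l2norm_unitary hK V hV
  set Dm : Matrix (Fin K) (Fin K) ℂ :=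
    Matrix.diagonal (fun k => ((min (c k) μ : ℝ) : ℂ)) with hDmdef
  set C : Matrix (Fin K) (Fin K) ℂ :=
    Matrix.diagonal (fun k => ((c k : ℝ) : ℂ)) with hCdef
  have hDmnorm : ‖Dm‖ ≤ μ := by
    refine l2norm_diagonal_le _ hμ.le fun k => ?_
    rw [Complex.norm_real, Real.norm_eq_abs, abs_of_nonneg (le_min (hc0 k) hμ.le)]
    exact min_le_right _ _
  have hAnorm : specNorm A ≤ μ := by
    show ‖A‖ ≤ μ
    rw [hA]
    calc ‖U * Dm * Vᴴ‖ ≤ ‖U * Dm‖ * ‖Vᴴ‖ := Matrix.l2_opNorm_mul _ _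
      _ ≤ ‖U‖ * ‖Dm‖ * ‖Vᴴ‖ :=
        mul_le_mul_of_nonneg_right (Matrix.l2_opNorm_mul _ _) (norm_nonneg _)
      _ = ‖Dm‖ := by rw [hUn, hVH, one_mul, mul_one]
      _ ≤ μ := hDmnorm
  refine ⟨hAnorm, fun A' hA' => ?_⟩
  set M : Matrix (Fin K) (Fin K) ℂ := Uᴴ * A' * V with hMdef
  have hA'n : ‖A'‖ ≤ μ := hA'
  have hMnorm : ‖M‖ ≤ μ := by
    calc ‖Uᴴ * A' * V‖ ≤ ‖Uᴴ * A'‖ * ‖V‖ := Matrix.l2_opNorm_mul _ _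
      _ ≤ ‖Uᴴ‖ * ‖A'‖ * ‖V‖ :=
        mul_le_mul_of_nonneg_right (Matrix.l2_opNorm_mul _ _) (norm_nonneg _)
      _ = ‖A'‖ := by rw [hUH, hVn, one_mul, mul_one]
      _ ≤ μ := hA'n
  have hA'eq : A' = U * M * Vᴴ := by
    rw [hMdef]
    calc A' = 1 * A' * 1 := by rw [Matrix.one_mul, Matrix.mul_one]
      _ = (U * Uᴴ) * A' * (V * Vᴴ) := by rw [hUU, hVV]
      _ = U * (Uᴴ * A' * V) * Vᴴ := by simp only [Matrix.mul_assoc]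
  have hAB : A - B = U * (Dm - C) * Vᴴ := by
    rw [hA, hB, Matrix.mul_sub, Matrix.sub_mul]
  have hA'B : A' - B = U * (M - C) * Vᴴ := by
    rw [hA'eq, hB, Matrix.mul_sub, Matrix.sub_mul]
  have hSAB : sqsum (A - B) = ∑ k, (c k - min (c k) μ) ^ 2 := by
    rw [hAB, sqsum_conj _ _ _ hU hV, hDmdef, hCdef, Matrix.diagonal_sub, sqsum_diagonal]
    refine Finset.sum_congr rfl fun k _ => ?_
    show ‖((min (c k) μ : ℝ) : ℂ) - ((c k : ℝ) : ℂ)‖ ^ 2 = (c k - min (c k) μ) ^ 2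
    rw [← Complex.ofReal_sub, Complex.norm_real, Real.norm_eq_abs, sq_abs]
    ring
  have hSA'B : sqsum (A' - B) = sqsum (M - C) := by
    rw [hA'B, sqsum_conj _ _ _ hU hV]
  have hdiagM : ∀ k, ‖M k k‖ ≤ μ := fun k => (entry_le_l2norm M k k).trans hMnorm
  have hMC : ∀ k, (M - C) k k = M k k - ((c k : ℝ) : ℂ) := by
    intro k
    rw [Matrix.sub_apply, hCdef, Matrix.diagonal_apply_eq]
  have hkey : ∀ k, (c k - min (c k) μ) ^ 2 ≤ ‖(M - C) k k‖ ^ 2 := by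
    intro k
    rw [hMC k]
    exact (scalar_key (hc0 k) hμ (hdiagM k)).1
  have step1 : ∑ k, (c k - min (c k) μ) ^ 2 ≤ ∑ k, ‖(M - C) k k‖ ^ 2 :=
    Finset.sum_le_sum fun k _ => hkey k
  have step2 : ∑ k, ‖(M - C) k k‖ ^ 2 ≤ sqsum (M - C) := by
    rw [sqsum]
    refine Finset.sum_le_sum fun j _ => ?_
    exact Finset.single_le_sum (f := fun k => ‖(M - C) j k‖ ^ 2)
      (fun k _ => by positivity) (Finset.mem_univ j)
  have hle : sqsum (A - B) ≤ sqsum (A' - B) := by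
    rw [hSAB, hSA'B]; linarith
  constructor
  · rw [frobNorm_eq, frobNorm_eq]
    exact Real.sqrt_le_sqrt hle
  · intro hfe
    rw [frobNorm_eq, frobNorm_eq] at hfe
    have hse : sqsum (A - B) = sqsum (A' - B) :=
      (Real.sqrt_inj (sqsum_nonneg _) (sqsum_nonneg _)).mp hfe
    rw [hSAB, hSA'B] at hse
    have heq1 : ∑ k, (c k - min (c k) μ) ^ 2 = ∑ k, ‖(M - C) k k‖ ^ 2 :=
      le_antisymm step1 (by linarith)
    have heq2 : ∑ k, ‖(M - C) k k‖ ^ 2 = sqsum (M - C) :=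
      le_antisymm step2 (by linarith)
    -- diagonal equalities
    have hdiageq : ∀ k, (c k - min (c k) μ) ^ 2 = ‖(M - C) k k‖ ^ 2 := by
      intro k
      have := (Finset.sum_eq_sum_iff_of_le (fun k _ => hkey k)).mp heq1
      exact this k (Finset.mem_univ k)
    have hMdiag : ∀ k, M k k = ((min (c k) μ : ℝ) : ℂ) := by
      intro k
      exact (scalar_key (hc0 k) hμ (hdiagM k)).2
        (by rw [← hMC k]; exact (hdiageq k).symm)
    -- off-diagonal zero
    have hoff : ∀ j k, j ≠ k → (M - C) j k = 0 := by
      intro j k hjk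
      have hrow : ∀ j, ‖(M - C) j j‖ ^ 2 = ∑ k, ‖(M - C) j k‖ ^ 2 := by
        intro i
        have hptw : ∀ i, ‖(M - C) i i‖ ^ 2 ≤ ∑ k, ‖(M - C) i k‖ ^ 2 := fun i =>
          Finset.single_le_sum (f := fun k => ‖(M - C) i k‖ ^ 2)
            (fun k _ => by positivity) (Finset.mem_univ i)
        have hq : ∑ k, ‖(M - C) k k‖ ^ 2 = ∑ i, ∑ k, ‖(M - C) i k‖ ^ 2 := by
          rw [heq2, sqsum]
        exact (Finset.sum_eq_sum_iff_of_le (fun i _ => hptw i)).mp hq i (Finset.mem_univ i)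
      have hzero : ∑ k ∈ Finset.univ.erase j, ‖(M - C) j k‖ ^ 2 = 0 := by
        have hsplit : ‖(M - C) j j‖ ^ 2 + ∑ x ∈ Finset.univ.erase j, ‖(M - C) j x‖ ^ 2
            = ∑ x, ‖(M - C) j x‖ ^ 2 :=
          Finset.add_sum_erase _ (fun k => ‖(M - C) j k‖ ^ 2) (Finset.mem_univ j)
        have := hrow j
        linarith
      have := (Finset.sum_eq_zero_iff_of_nonneg
        (fun k _ => by positivity)).mp hzero k (Finset.mem_erase.mpr ⟨hjk.symm, Finset.mem_univ k⟩)
      have h2 : ‖(M - C) j k‖ = 0 := by nlinarith [norm_nonneg ((M - C) j k)]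
      exact norm_eq_zero.mp h2
    -- conclude M = Dm
    have hMDm : M = Dm := by
      ext i j
      rcases eq_or_ne i j with rfl | hij
      · rw [hMdiag i, hDmdef, Matrix.diagonal_apply_eq]
      · have h0 := hoff i j hij
        rw [Matrix.sub_apply, hCdef, Matrix.diagonal_apply_ne _ hij, sub_zero] at h0
        rw [h0, hDmdef, Matrix.diagonal_apply_ne _ hij]
    rw [hA'eq, hMDm, ← hA]
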